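/- Let f be chosen uniformly at random from the 2n-simplex, and over all subsets y of {1, …, 2n} of cardinality n let (y, y^c) maximize |f̄(y) − 1/2| + |f̄(y^c) − 1/2|. Then as n → ∞, this maximum discrepancy converges in probability to log 2 (natural logarithm). -/

import Mathlib

open MeasureTheory ProbabilityTheory Filter Finset Topology

section AuxiliaryLemmas
open Set Real

namespace MHS

noncomputable instance : IsProbabilityMeasure (expMeasure 1) :=
  isProbabilityMeasure_expMeasure one_pos

lemma exp_Iic {x : ℝ} (hx : 0 ≤ x) :
    expMeasure 1 (Iic x) = ENNReal.ofReal (1 - Real.exp (-x)) := by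
  have h := (cdf_eq_real (μ := expMeasure 1) x).trans (measureReal_def _ _)
  have h2 : cdf (expMeasure 1) x = 1 - Real.exp (-x) := by
    rw [cdf_expMeasure_eq one_pos, if_pos hx, one_mul]
  rw [h2] at h
  rw [h, ENNReal.ofReal_toReal (measure_ne_top _ _)]

lemma exp_singleton (x : ℝ) : expMeasure 1 {x} = 0 := by
  rw [expMeasure, gammaMeasure, withDensity_apply _ (measurableSet_singleton x)]
  simp [Measure.restrict_singleton]

lemma exp_Ici {x : ℝ} (hx : 0 ≤ x) :
    expMeasure 1 (Ici x) = ENNReal.ofReal (Real.exp (-x)) := by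
  have h1 : expMeasure 1 (Ioi x) = ENNReal.ofReal (Real.exp (-x)) := by
    have := measure_compl (μ := expMeasure 1) measurableSet_Iic (measure_ne_top _ (Iic x))
    rw [compl_Iic] at this
    rw [this, exp_Iic hx, measure_univ]
    rw [← ENNReal.ofReal_one, ← ENNReal.ofReal_sub _ (by simp [Real.exp_le_one_iff]; positivity)]
    norm_num
  refine le_antisymm ?_ (h1 ▸ measure_mono Ioi_subset_Ici_self)
  have : Ici x = {x} ∪ Ioi x := by
    ext y; simp [le_iff_lt_or_eq, or_comm, eq_comm]
  calc expMeasure 1 (Ici x) ≤ expMeasure 1 {x} + expMeasure 1 (Ioi x) := by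
        rw [this]; exact measure_union_le _ _
    _ = ENNReal.ofReal (Real.exp (-x)) := by rw [exp_singleton, zero_add, h1]

end MHS

namespace MHS2
open MHS
open scoped ENNReal NNReal

noncomputable def g0 (x : ℝ) : ℝ := if 0 ≤ x then Real.exp (-x) else 0

lemma g0_nonneg (x : ℝ) : 0 ≤ g0 x := by unfold g0; split <;> positivity

lemma measurable_g0 : Measurable g0 :=
  Measurable.ite measurableSet_Ici (by fun_prop) measurable_const

lemma g0_eq_indicator : g0 = (Ici (0:ℝ)).indicator (fun x => Real.exp (-x)) := by
  funext x; simp [g0, Set.indicator_apply]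

lemma expMeasure_eq :
    expMeasure 1 = volume.withDensity (fun x => ENNReal.ofReal (g0 x)) := by
  rw [expMeasure, gammaMeasure]
  congr 1
  funext x
  rw [gammaPDF_eq, g0]
  split <;> simp_all [Real.Gamma_one, Real.rpow_zero, Real.one_rpow]

lemma integral_expMeasure (f : ℝ → ℝ) :
    ∫ x, f x ∂(expMeasure 1) = ∫ x in Ioi (0:ℝ), Real.exp (-x) * f x := by
  rw [expMeasure_eq]
  have h1 : (fun x => ENNReal.ofReal (g0 x)) = (fun x => ((g0 x).toNNReal : ℝ≥0∞)) := rfl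
  rw [h1, integral_withDensity_eq_integral_smul (by exact measurable_g0.real_toNNReal) f]
  have h2 : (fun x => (g0 x).toNNReal • f x)
      = (Ici (0:ℝ)).indicator (fun x => Real.exp (-x) * f x) := by
    funext x
    have hc : ((g0 x).toNNReal : ℝ) = g0 x := Real.coe_toNNReal _ (g0_nonneg x)
    rw [NNReal.smul_def, smul_eq_mul, hc, Set.indicator_apply]
    unfold g0
    by_cases h : (0:ℝ) ≤ x <;> simp [h]
  rw [h2, integral_indicator measurableSet_Ici, integral_Ici_eq_integral_Ioi]

lemma integrable_expMeasure {f : ℝ → ℝ}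
    (hf : IntegrableOn (fun x => Real.exp (-x) * f x) (Ioi (0:ℝ))) :
    Integrable f (expMeasure 1) := by
  rw [expMeasure_eq,
    integrable_withDensity_iff measurable_g0.ennreal_ofReal
      (ae_of_all _ fun x => ENNReal.ofReal_lt_top)]
  have h2 : (fun x => f x * (ENNReal.ofReal (g0 x)).toReal)
      = (Ici (0:ℝ)).indicator (fun x => Real.exp (-x) * f x) := by
    funext x
    rw [ENNReal.toReal_ofReal (g0_nonneg x), Set.indicator_apply]
    unfold g0
    by_cases h : (0:ℝ) ≤ x <;> simp [h, mul_comm]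
  rw [h2, integrable_indicator_iff measurableSet_Ici]
  exact Iff.mpr integrableOn_Ici_iff_integrableOn_Ioi hf

lemma I1 : IntegrableOn (fun x => Real.exp (-x) * x) (Ioi (0:ℝ)) := by
  have := Real.GammaIntegral_convergent (s := 2) (by norm_num)
  rw [show ((2:ℝ)-1) = 1 by norm_num] at this
  simpa [Real.rpow_one] using this

lemma I1_val : ∫ x in Ioi (0:ℝ), Real.exp (-x) * x = 1 := by
  have h := Real.Gamma_eq_integral (s := 2) (by norm_num)
  have h2 : Real.Gamma 2 = 1 := by
    rw [show (2:ℝ) = (1:ℕ) + 1 by norm_num, Real.Gamma_nat_eq_factorial]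
    norm_num
  rw [h2, show ((2:ℝ)-1) = 1 by norm_num] at h
  calc ∫ x in Ioi (0:ℝ), Real.exp (-x) * x
      = ∫ x in Ioi (0:ℝ), Real.exp (-x) * x ^ (1:ℝ) := by
        apply setIntegral_congr_fun measurableSet_Ioi
        intro x _
        simp [Real.rpow_one]
    _ = 1 := h.symm

lemma I0 : IntegrableOn (fun x => Real.exp (-x)) (Ioi (0:ℝ)) := by
  have := Real.GammaIntegral_convergent (s := 1) one_pos
  rw [show ((1:ℝ)-1) = 0 by norm_num] at this
  simpa [Real.rpow_zero] using this

lemma I0_val : ∫ x in Ioi (0:ℝ), Real.exp (-x) = 1 := by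
  have h := Real.Gamma_eq_integral (s := 1) one_pos
  rw [Real.Gamma_one, show ((1:ℝ)-1) = 0 by norm_num] at h
  calc ∫ x in Ioi (0:ℝ), Real.exp (-x)
      = ∫ x in Ioi (0:ℝ), Real.exp (-x) * x ^ (0:ℝ) := by
        apply setIntegral_congr_fun measurableSet_Ioi
        intro x _
        simp [Real.rpow_zero]
    _ = 1 := h.symm


lemma Im_int {c : ℝ} (hc : 0 ≤ c) :
    IntegrableOn (fun x => Real.exp (-x) * max (c - x) 0) (Ioi (0:ℝ)) := by
  apply Integrable.mono (I0.const_mul c)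
  · exact ((Real.continuous_exp.comp continuous_neg).mul
      ((continuous_const.sub continuous_id).max continuous_const)).aestronglyMeasurable
  · refine (ae_restrict_iff' measurableSet_Ioi).mpr (ae_of_all _ fun x hx => ?_)
    have h0 : (0:ℝ) < x := hx
    have h1 : (0:ℝ) ≤ max (c - x) 0 := le_max_right _ _
    have h2 : max (c - x) 0 ≤ c := max_le (by linarith) hc
    rw [Real.norm_eq_abs, Real.norm_eq_abs, abs_of_nonneg (by positivity),
      abs_of_nonneg (by positivity)]
    exact (mul_le_mul_of_nonneg_left h2 (Real.exp_pos _).le).trans_eq (mul_comm _ _)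

lemma hasDerivAt_F (c x : ℝ) :
    HasDerivAt (fun y => (y + 1 - c) * Real.exp (-y)) (Real.exp (-x) * (c - x)) x := by
  have h1 : HasDerivAt (fun y : ℝ => y + 1 - c) 1 x := ((hasDerivAt_id x).add_const 1).sub_const c
  have h2 : HasDerivAt (fun y : ℝ => Real.exp (-y)) (-Real.exp (-x)) x := by
    simpa [Function.comp_def] using (Real.hasDerivAt_exp (-x)).comp x (hasDerivAt_neg x)
  have := h1.mul h2
  exact this.congr_deriv (by ring)

lemma Im_val {c : ℝ} (hc : 0 ≤ c) :
    ∫ x in Ioi (0:ℝ), Real.exp (-x) * max (c - x) 0 = Real.exp (-c) - 1 + c := by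
  have hsplit : Ioi (0:ℝ) = Ioc 0 c ∪ Ioi c := (Set.Ioc_union_Ioi_eq_Ioi hc).symm
  rw [hsplit, setIntegral_union (Set.Ioc_disjoint_Ioi le_rfl) measurableSet_Ioi
    ((Im_int hc).mono_set (hsplit ▸ Set.subset_union_left))
    ((Im_int hc).mono_set (hsplit ▸ Set.subset_union_right))]
  have h2 : ∫ x in Ioi c, Real.exp (-x) * max (c - x) 0 = 0 := by
    rw [setIntegral_congr_fun measurableSet_Ioi (g := fun _ => (0:ℝ))
      (fun x hx => by
        have : c < x := hx
        rw [max_eq_right (by linarith), mul_zero])]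
    exact integral_zero _ _
  have h1 : ∫ x in Ioc (0:ℝ) c, Real.exp (-x) * max (c - x) 0
      = Real.exp (-c) - 1 + c := by
    rw [setIntegral_congr_fun measurableSet_Ioc (g := fun x => Real.exp (-x) * (c - x))
      (fun x hx => by rw [max_eq_left (by linarith [hx.2])])]
    rw [← intervalIntegral.integral_of_le hc]
    rw [intervalIntegral.integral_eq_sub_of_hasDerivAt
      (f := fun y => (y + 1 - c) * Real.exp (-y))
      (fun x _ => hasDerivAt_F c x)
      (((Real.continuous_exp.comp continuous_neg).mul
        (continuous_const.sub continuous_id)).intervalIntegrable 0 c)]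
    simp [Real.exp_zero]
    ring
  rw [h1, h2, add_zero]

lemma abs_decomp (c x : ℝ) : |x - c| = (x - c) + 2 * max (c - x) 0 := by
  rcases le_total c x with h | h
  · rw [abs_of_nonneg (by linarith), max_eq_right (by linarith)]
    ring
  · rw [abs_of_nonpos (by linarith), max_eq_left (by linarith)]
    ring

lemma exp_abs_decomp (c : ℝ) : (fun x => Real.exp (-x) * |x - c|) = fun x =>
    (Real.exp (-x) * x - c * Real.exp (-x)) + 2 * (Real.exp (-x) * max (c - x) 0) := by
  funext x
  rw [abs_decomp]
  ring

lemma integrable_abs_exp {c : ℝ} (hc : 0 ≤ c) :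
    Integrable (fun x => |x - c|) (expMeasure 1) := by
  apply integrable_expMeasure
  rw [show (fun x => Real.exp (-x) * |x - c|) = _ from exp_abs_decomp c]
  exact (I1.sub (I0.const_mul c)).add (((Im_int hc)).const_mul 2)

lemma integral_abs_exp {c : ℝ} (hc : 0 ≤ c) :
    ∫ x, |x - c| ∂(expMeasure 1) = c - 1 + 2 * Real.exp (-c) := by
  rw [integral_expMeasure, show (fun x => Real.exp (-x) * |x - c|) = _ from exp_abs_decomp c]
  rw [integral_add (f := fun x => Real.exp (-x) * x - c * Real.exp (-x))
      (g := fun x => 2 * (Real.exp (-x) * max (c - x) 0))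
      (I1.sub (I0.const_mul c)) ((Im_int hc).const_mul 2),
    integral_sub (f := fun x => Real.exp (-x) * x) (g := fun x => c * Real.exp (-x))
      I1 (I0.const_mul c), MeasureTheory.integral_const_mul, MeasureTheory.integral_const_mul,
    I1_val, I0_val, Im_val hc]
  ring

lemma integrable_id_exp : Integrable (fun x : ℝ => x) (expMeasure 1) :=
  integrable_expMeasure I1

lemma integral_id_exp : ∫ x, x ∂(expMeasure 1) = 1 := by
  rw [integral_expMeasure]
  exact I1_val

lemma integrable_ind (c : ℝ) :
    Integrable ((Ici c).indicator (fun _ => (1:ℝ))) (expMeasure 1) :=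
  (integrable_const 1).indicator measurableSet_Ici

lemma integral_ind {c : ℝ} (hc : 0 ≤ c) :
    ∫ x, (Ici c).indicator (fun _ => (1:ℝ)) x ∂(expMeasure 1) = Real.exp (-c) := by
  rw [integral_indicator_const (1:ℝ) measurableSet_Ici, measureReal_def, MHS.exp_Ici hc,
    ENNReal.toReal_ofReal (Real.exp_pos _).le, smul_eq_mul, mul_one]

end MHS2

namespace MHS3
open MHS MHS2

variable {Ω : Type*} [MeasurableSpace Ω] {P : Measure Ω} [IsProbabilityMeasure P]
  {X : ℕ → Ω → ℝ}

lemma lln (hmeas : ∀ i, Measurable (X i))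
    (hdist : ∀ i, Measure.map (X i) P = expMeasure 1)
    (hindep : iIndepFun X P)
    (h : ℝ → ℝ) (hh : Measurable h) (hint : Integrable h (expMeasure 1)) :
    ∀ᵐ ω ∂P, Tendsto (fun n : ℕ => (∑ i ∈ range n, h (X i ω)) / n) atTop
      (𝓝 (∫ x, h x ∂(expMeasure 1))) := by
  have hid : ∀ i, IdentDistrib (fun ω => h (X i ω)) (fun ω => h (X 0 ω)) P P := by
    intro i
    exact IdentDistrib.comp
      ⟨(hmeas i).aemeasurable, (hmeas 0).aemeasurable, by rw [hdist i, hdist 0]⟩ hh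
  have hint' : Integrable (fun ω => h (X 0 ω)) P := by
    have h1 : Integrable h (Measure.map (X 0) P) := by rw [hdist 0]; exact hint
    exact (integrable_map_measure (by rw [hdist 0]; exact hint.aestronglyMeasurable)
      (hmeas 0).aemeasurable).mp h1
  have hindep' : Pairwise (Function.onFun (IndepFun · · P) (fun i ω => h (X i ω))) := by
    intro i j hij
    exact (hindep.indepFun hij).comp hh hh
  have hsl := strong_law_ae_real (fun i ω => h (X i ω)) hint' hindep' hid
  have heq : (∫ ω, h (X 0 ω) ∂P) = ∫ x, h x ∂(expMeasure 1) := by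
    rw [← hdist 0, integral_map (hmeas 0).aemeasurable
      (by rw [hdist 0]; exact hh.aestronglyMeasurable)]
  rw [heq] at hsl
  exact hsl

lemma prob_tendsto_zero {W : ℕ → Ω → ℝ} (hW : ∀ n, AEStronglyMeasurable (W n) P) {L r : ℝ}
    (hr : 0 < r) (hae : ∀ᵐ ω ∂P, Tendsto (fun n => W n ω) atTop (𝓝 L))
    (S : ℕ → Set Ω) (hS : ∀ n, S n ⊆ {ω | r ≤ |W n ω - L|}) :
    Tendsto (fun n => P (S n)) atTop (𝓝 0) := by
  have h := tendstoInMeasure_of_tendsto_ae hW (g := fun _ => L) hae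
  have h2 := h (ENNReal.ofReal r) (ENNReal.ofReal_pos.mpr hr)
  refine tendsto_of_tendsto_of_tendsto_of_le_of_le tendsto_const_nhds h2
    (fun n => zero_le) (fun n => measure_mono ((hS n).trans ?_))
  intro ω hω
  show ENNReal.ofReal r ≤ edist (W n ω) L
  rw [edist_dist, Real.dist_eq]
  exact ENNReal.ofReal_le_ofReal hω

end MHS3

namespace MHS4

/-- The set of discrepancies. -/
def Dset (x : ℕ → ℝ) (n : ℕ) : Set ℝ :=
  {d : ℝ | ∃ y : Finset ℕ, y ⊆ Finset.range (2 * n) ∧ y.card = n ∧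
    d = |(∑ i ∈ y, x i / (∑ j ∈ Finset.range (2 * n), x j)) - 1 / 2|
      + |(∑ i ∈ Finset.range (2 * n) \ y, x i / (∑ j ∈ Finset.range (2 * n), x j)) - 1 / 2|}

lemma elem_eq {x : ℕ → ℝ} {n : ℕ} (hn : 0 < n)
    (hpos : ∀ i ∈ Finset.range (2 * n), 0 < x i)
    {y : Finset ℕ} (hy : y ⊆ Finset.range (2 * n)) (hcard : y.card = n) :
    |(∑ i ∈ y, x i / (∑ j ∈ Finset.range (2 * n), x j)) - 1 / 2|
      + |(∑ i ∈ Finset.range (2 * n) \ y, x i / (∑ j ∈ Finset.range (2 * n), x j)) - 1 / 2|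
    = |(∑ i ∈ y, x i) - ∑ i ∈ Finset.range (2 * n) \ y, x i|
        / (∑ j ∈ Finset.range (2 * n), x j) := by
  set T := ∑ j ∈ Finset.range (2 * n), x j with hT
  have hTpos : 0 < T := by
    apply Finset.sum_pos hpos
    simpa [Finset.nonempty_range_iff] using by omega
  set s := ∑ i ∈ y, x i with hs
  set t := ∑ i ∈ Finset.range (2 * n) \ y, x i with ht
  have hst : t + s = T := Finset.sum_sdiff hy
  rw [← Finset.sum_div, ← Finset.sum_div, ← hs, ← ht]
  have e1 : s / T - 1 / 2 = (s - t) / (2 * T) := by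
    field_simp
    rw [← hst]
    ring
  have e2 : t / T - 1 / 2 = (t - s) / (2 * T) := by
    field_simp
    rw [← hst]
    ring
  rw [e1, e2, abs_div, abs_div, abs_of_pos (by positivity : (0:ℝ) < 2 * T),
    abs_sub_comm t s]
  field_simp
  ring

lemma diff_shift {x : ℕ → ℝ} {n : ℕ} (c : ℝ)
    {y : Finset ℕ} (hy : y ⊆ Finset.range (2 * n)) (hcard : y.card = n) :
    (∑ i ∈ y, x i) - ∑ i ∈ Finset.range (2 * n) \ y, x i
      = (∑ i ∈ y, (x i - c)) - ∑ i ∈ Finset.range (2 * n) \ y, (x i - c) := by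
  have hcard2 : (Finset.range (2 * n) \ y).card = n := by
    rw [Finset.card_sdiff_of_subset hy, Finset.card_range, hcard]
    omega
  rw [Finset.sum_sub_distrib, Finset.sum_sub_distrib, Finset.sum_const, Finset.sum_const,
    hcard, hcard2]
  ring

lemma upper_bound {x : ℕ → ℝ} {n : ℕ} (hn : 0 < n)
    (hpos : ∀ i ∈ Finset.range (2 * n), 0 < x i) (c : ℝ)
    {d : ℝ} (hd : d ∈ Dset x n) :
    d ≤ (∑ i ∈ Finset.range (2 * n), |x i - c|) / (∑ j ∈ Finset.range (2 * n), x j) := by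
  obtain ⟨y, hy, hcard, rfl⟩ := hd
  rw [elem_eq hn hpos hy hcard, diff_shift c hy hcard]
  have hTpos : 0 < ∑ j ∈ Finset.range (2 * n), x j := by
    apply Finset.sum_pos hpos
    simpa [Finset.nonempty_range_iff] using by omega
  apply (div_le_div_iff_of_pos_right hTpos).mpr
  calc |(∑ i ∈ y, (x i - c)) - ∑ i ∈ Finset.range (2 * n) \ y, (x i - c)|
      ≤ |∑ i ∈ y, (x i - c)| + |∑ i ∈ Finset.range (2 * n) \ y, (x i - c)| :=
        abs_sub _ _
    _ ≤ (∑ i ∈ y, |x i - c|) + ∑ i ∈ Finset.range (2 * n) \ y, |x i - c| :=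
        add_le_add (Finset.abs_sum_le_sum_abs _ _) (Finset.abs_sum_le_sum_abs _ _)
    _ = ∑ i ∈ Finset.range (2 * n), |x i - c| := by
        rw [add_comm]
        exact Finset.sum_sdiff hy

lemma lower_bound {x : ℕ → ℝ} {n : ℕ} (hn : 0 < n)
    (hpos : ∀ i ∈ Finset.range (2 * n), 0 < x i) {c c₁ c₂ : ℝ}
    (hc₁ : c₁ ≤ c) (hc₂ : c ≤ c₂)
    (hN1 : n ≤ ((Finset.range (2 * n)).filter (fun i => c₁ ≤ x i)).card)
    (hN2 : ((Finset.range (2 * n)).filter (fun i => c₂ ≤ x i)).card ≤ n) :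
    ∃ d ∈ Dset x n,
      ((∑ i ∈ Finset.range (2 * n), |x i - c|) - 2 * n * (c₂ - c₁))
          / (∑ j ∈ Finset.range (2 * n), x j) ≤ d := by
  classical
  set s₁ := (Finset.range (2 * n)).filter (fun i => c₁ ≤ x i) with hs₁
  set s₂ := (Finset.range (2 * n)).filter (fun i => c₂ ≤ x i) with hs₂
  have hsub : s₂ ⊆ s₁ := by
    intro i hi
    rw [hs₂, Finset.mem_filter] at hi
    rw [hs₁, Finset.mem_filter]
    exact ⟨hi.1, le_trans (le_trans hc₁ hc₂) hi.2⟩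
  obtain ⟨y, hy₂, hy₁, hycard⟩ := Finset.exists_subsuperset_card_eq hsub
    (by omega) (by omega)
  have hcard : y.card = n := by omega
  have hyr : y ⊆ Finset.range (2 * n) := hy₁.trans (Finset.filter_subset _ _)
  refine ⟨_, ⟨y, hyr, hcard, rfl⟩, ?_⟩
  rw [elem_eq hn hpos hyr hcard, diff_shift c hyr hcard]
  have hTpos : 0 < ∑ j ∈ Finset.range (2 * n), x j := by
    apply Finset.sum_pos hpos
    simpa [Finset.nonempty_range_iff] using by omega
  apply (div_le_div_iff_of_pos_right hTpos).mpr
  refine le_trans ?_ (le_abs_self _)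
  have hb1 : ∀ i ∈ y, |x i - c| - 2 * (c - c₁) ≤ x i - c := by
    intro i hi
    have : c₁ ≤ x i := (Finset.mem_filter.mp (hy₁ hi)).2
    rcases le_total c (x i) with h | h
    · rw [abs_of_nonneg (by linarith)]
      linarith
    · rw [abs_of_nonpos (by linarith)]
      linarith
  have hb2 : ∀ i ∈ Finset.range (2 * n) \ y, |x i - c| - 2 * (c₂ - c) ≤ -(x i - c) := by
    intro i hi
    have hni : i ∉ s₂ := fun h => (Finset.mem_sdiff.mp hi).2 (hy₂ h)
    have : x i < c₂ := by
      by_contra h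
      exact hni (Finset.mem_filter.mpr ⟨(Finset.mem_sdiff.mp hi).1, le_of_not_gt h⟩)
    rcases le_total c (x i) with h | h
    · rw [abs_of_nonneg (by linarith)]
      linarith
    · rw [abs_of_nonpos (by linarith)]
      linarith
  have hcard2 : (Finset.range (2 * n) \ y).card = n := by
    rw [Finset.card_sdiff_of_subset hyr, Finset.card_range, hcard]
    omega
  have h1 : (∑ i ∈ y, |x i - c|) - n * (2 * (c - c₁)) ≤ ∑ i ∈ y, (x i - c) := by
    calc (∑ i ∈ y, |x i - c|) - n * (2 * (c - c₁))
        = ∑ i ∈ y, (|x i - c| - 2 * (c - c₁)) := by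
          rw [Finset.sum_sub_distrib, Finset.sum_const, hcard]
          push_cast
          ring
      _ ≤ _ := Finset.sum_le_sum hb1
  have h2 : (∑ i ∈ Finset.range (2 * n) \ y, |x i - c|) - n * (2 * (c₂ - c))
      ≤ ∑ i ∈ Finset.range (2 * n) \ y, -(x i - c) := by
    calc (∑ i ∈ Finset.range (2 * n) \ y, |x i - c|) - n * (2 * (c₂ - c))
        = ∑ i ∈ Finset.range (2 * n) \ y, (|x i - c| - 2 * (c₂ - c)) := by
          rw [Finset.sum_sub_distrib, Finset.sum_const, hcard2]
          push_cast
          ring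
      _ ≤ _ := Finset.sum_le_sum hb2
  have hsum : (∑ i ∈ Finset.range (2 * n) \ y, |x i - c|) + ∑ i ∈ y, |x i - c|
      = ∑ i ∈ Finset.range (2 * n), |x i - c| := Finset.sum_sdiff hyr
  rw [Finset.sum_neg_distrib] at h2
  linarith

lemma det_bounds {x : ℕ → ℝ} {n : ℕ} (hn : 0 < n)
    (hpos : ∀ i ∈ Finset.range (2 * n), 0 < x i) {c c₁ c₂ : ℝ}
    (hc₁ : c₁ ≤ c) (hc₂ : c ≤ c₂)
    (hN1 : n ≤ ((Finset.range (2 * n)).filter (fun i => c₁ ≤ x i)).card)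
    (hN2 : ((Finset.range (2 * n)).filter (fun i => c₂ ≤ x i)).card ≤ n) :
    ((∑ i ∈ Finset.range (2 * n), |x i - c|) - 2 * n * (c₂ - c₁))
        / (∑ j ∈ Finset.range (2 * n), x j) ≤ sSup (Dset x n) ∧
    sSup (Dset x n)
      ≤ (∑ i ∈ Finset.range (2 * n), |x i - c|) / (∑ j ∈ Finset.range (2 * n), x j) := by
  obtain ⟨d, hd, hdl⟩ := lower_bound hn hpos hc₁ hc₂ hN1 hN2
  have hbdd : BddAbove (Dset x n) :=
    ⟨_, fun e he => upper_bound hn hpos c he⟩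
  exact ⟨hdl.trans (le_csSup hbdd hd),
    csSup_le ⟨d, hd⟩ (fun e he => upper_bound hn hpos c he)⟩

end MHS4

lemma div_div_aux {a b d : ℝ} (hd : d ≠ 0) : (a / d) / (b / d) = a / b := by
  rcases eq_or_ne b 0 with rfl | hb
  · simp
  · field_simp


end AuxiliaryLemmas

/-- **Corollary 5.3: the maximum discrepancy of a half split tends to `log 2`.**
Let `f` be chosen uniformly from the `2n`-simplex, realized as
`f_i = X_i/(X_1+⋯+X_{2n})` for i.i.d. standard exponentials `X_1, X_2, …`.
Over all subsets `y ⊆ {1, …, 2n}` of cardinality `n`, let `(y, y^c)` maximize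
`|f̄(y) − 1/2| + |f̄(y^c) − 1/2|`.  Then as `n → ∞` this maximum discrepancy
converges in probability to `log 2`. -/
theorem max_half_split_discrepancy_tendsto_log_two
    {Ω : Type*} [MeasurableSpace Ω] (P : Measure Ω) [IsProbabilityMeasure P]
    (X : ℕ → Ω → ℝ)
    (hmeas : ∀ i, Measurable (X i))
    (hdist : ∀ i, Measure.map (X i) P = expMeasure 1)
    (hindep : iIndepFun X P) :
    ∀ ε : ℝ, 0 < ε →
      Tendsto (fun n : ℕ =>
          P {ω |
            |sSup {d : ℝ | ∃ y : Finset ℕ, y ⊆ Finset.range (2 * n) ∧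
                y.card = n ∧
                d = |(∑ i ∈ y, X i ω / (∑ j ∈ Finset.range (2 * n), X j ω))
                      - 1 / 2|
                  + |(∑ i ∈ Finset.range (2 * n) \ y,
                        X i ω / (∑ j ∈ Finset.range (2 * n), X j ω)) - 1 / 2|}
              - Real.log 2| > ε})
        atTop (𝓝 0) := by
  classical
  intro ε hε
  set c : ℝ := Real.log 2 with hc
  have hcpos : 0 < c := Real.log_pos one_lt_two
  set δ : ℝ := min (ε / 8) (c / 2) with hδ
  have hδpos : 0 < δ := lt_min (by linarith) (by linarith)
  have hδ8 : δ ≤ ε / 8 := min_le_left _ _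
  have hδc : δ ≤ c / 2 := min_le_right _ _
  set c₁ : ℝ := c - δ with hc₁
  set c₂ : ℝ := c + δ with hc₂
  have hc₁pos : 0 < c₁ := by rw [hc₁]; linarith
  have hc₂pos : 0 < c₂ := by rw [hc₂]; linarith
  set p₁ : ℝ := Real.exp (-c₁) with hp₁
  set p₂ : ℝ := Real.exp (-c₂) with hp₂
  have hexpc : Real.exp (-c) = 1 / 2 := by
    rw [Real.exp_neg, hc, Real.exp_log two_pos]
    norm_num
  have hp₁half : 1 / 2 < p₁ := by
    rw [hp₁, ← hexpc]
    apply Real.exp_lt_exp.mpr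
    rw [hc₁]
    linarith
  have hp₂half : p₂ < 1 / 2 := by
    rw [hp₂, ← hexpc]
    apply Real.exp_lt_exp.mpr
    rw [hc₂]
    linarith
  -- LLN limits
  have h2n : Tendsto (fun n : ℕ => 2 * n) atTop atTop :=
    tendsto_atTop_atTop.mpr fun b => ⟨b, fun a ha => by omega⟩
  have hAint : (∫ x, |x - c| ∂(expMeasure 1)) = c := by
    rw [MHS2.integral_abs_exp hcpos.le, hexpc]
    ring
  have hA := MHS3.lln hmeas hdist hindep (fun x => |x - c|)
    ((measurable_id.sub measurable_const).abs) (MHS2.integrable_abs_exp hcpos.le)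
  rw [hAint] at hA
  have hT := MHS3.lln hmeas hdist hindep (fun x => x) measurable_id MHS2.integrable_id_exp
  rw [MHS2.integral_id_exp] at hT
  have hB1 := MHS3.lln hmeas hdist hindep ((Set.Ici c₁).indicator (fun _ => (1:ℝ)))
    (measurable_const.indicator measurableSet_Ici) (MHS2.integrable_ind c₁)
  rw [MHS2.integral_ind hc₁pos.le] at hB1
  have hB2 := MHS3.lln hmeas hdist hindep ((Set.Ici c₂).indicator (fun _ => (1:ℝ)))
    (measurable_const.indicator measurableSet_Ici) (MHS2.integrable_ind c₂)
  rw [MHS2.integral_ind hc₂pos.le] at hB2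
  -- positivity
  have hXpos : ∀ i, P {ω | X i ω ≤ 0} = 0 := by
    intro i
    have h1 : {ω | X i ω ≤ 0} = X i ⁻¹' (Set.Iic 0) := rfl
    rw [h1, ← Measure.map_apply (hmeas i) measurableSet_Iic, hdist i,
      MHS.exp_Iic le_rfl]
    simp [Real.exp_zero]
  -- the bound functions
  set hfun : ℕ → Ω → ℝ := fun n ω =>
    (∑ i ∈ Finset.range (2 * n), |X i ω - c|) / (∑ j ∈ Finset.range (2 * n), X j ω)
    with hhfun
  set gfun : ℕ → Ω → ℝ := fun n ω =>
    ((∑ i ∈ Finset.range (2 * n), |X i ω - c|) - 2 * n * (c₂ - c₁))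
      / (∑ j ∈ Finset.range (2 * n), X j ω) with hgfun
  set V₁ : ℕ → Ω → ℝ := fun n ω =>
    (∑ i ∈ Finset.range (2 * n), (Set.Ici c₁).indicator (fun _ => (1:ℝ)) (X i ω))
      / ((2 * n : ℕ) : ℝ) with hV₁
  set V₂ : ℕ → Ω → ℝ := fun n ω =>
    (∑ i ∈ Finset.range (2 * n), (Set.Ici c₂).indicator (fun _ => (1:ℝ)) (X i ω))
      / ((2 * n : ℕ) : ℝ) with hV₂
  -- a.e. limits for the bound functions
  have hhlim : ∀ᵐ ω ∂P, Tendsto (fun n => hfun n ω) atTop (𝓝 c) := by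
    filter_upwards [hA, hT] with ω hAω hTω
    have hq := (hAω.comp h2n).div (hTω.comp h2n) one_ne_zero
    rw [div_one] at hq
    apply hq.congr'
    filter_upwards [eventually_ge_atTop 1] with n hn
    have hd : ((2 * n : ℕ) : ℝ) ≠ 0 := by positivity
    exact div_div_aux hd
  have hglim : ∀ᵐ ω ∂P, Tendsto (fun n => gfun n ω) atTop (𝓝 (c - (c₂ - c₁))) := by
    filter_upwards [hA, hT] with ω hAω hTω
    have hq := ((hAω.comp h2n).sub_const (c₂ - c₁)).div (hTω.comp h2n) one_ne_zero
    rw [div_one] at hq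
    apply hq.congr'
    filter_upwards [eventually_ge_atTop 1] with n hn
    have hd : ((2 * n : ℕ) : ℝ) ≠ 0 := by positivity
    have hnn : ((n : ℕ) : ℝ) ≠ 0 := by
      simp only [ne_eq, Nat.cast_eq_zero]
      omega
    have heq : (∑ i ∈ Finset.range (2 * n), |X i ω - c|) / ((2 * n : ℕ) : ℝ) - (c₂ - c₁)
        = ((∑ i ∈ Finset.range (2 * n), |X i ω - c|) - 2 * n * (c₂ - c₁))
            / ((2 * n : ℕ) : ℝ) := by
      have hdd : ((2 * n : ℕ) : ℝ) = 2 * (n : ℝ) := by push_cast; ring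
      rw [hdd]
      field_simp
      try ring
    simp only [Pi.div_apply, Function.comp_apply]
    rw [heq]
    exact div_div_aux hd
  have hV₁lim : ∀ᵐ ω ∂P, Tendsto (fun n => V₁ n ω) atTop (𝓝 p₁) := by
    filter_upwards [hB1] with ω hω
    exact hω.comp h2n
  have hV₂lim : ∀ᵐ ω ∂P, Tendsto (fun n => V₂ n ω) atTop (𝓝 p₂) := by
    filter_upwards [hB2] with ω hω
    exact hω.comp h2n
  -- measurability of bound functions
  have hmeas_sumabs : ∀ n, Measurable fun ω => ∑ i ∈ Finset.range (2 * n), |X i ω - c| :=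
    fun n => Finset.measurable_sum _ (fun i _ => ((hmeas i).sub measurable_const).abs)
  have hmeas_sum : ∀ n, Measurable fun ω => ∑ j ∈ Finset.range (2 * n), X j ω :=
    fun n => Finset.measurable_sum _ (fun i _ => hmeas i)
  have hmeas_h : ∀ n, Measurable (hfun n) :=
    fun n => (hmeas_sumabs n).div (hmeas_sum n)
  have hmeas_g : ∀ n, Measurable (gfun n) :=
    fun n => ((hmeas_sumabs n).sub measurable_const).div (hmeas_sum n)
  have hmeas_V : ∀ (a : ℝ) n, Measurable fun ω =>
      (∑ i ∈ Finset.range (2 * n), (Set.Ici a).indicator (fun _ => (1:ℝ)) (X i ω))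
        / ((2 * n : ℕ) : ℝ) :=
    fun a n => (Finset.measurable_sum _ (fun i _ =>
      (measurable_const.indicator measurableSet_Ici).comp (hmeas i))).div measurable_const
  -- the four convergent bad-event probabilities
  have hbad1 := MHS3.prob_tendsto_zero (P := P) (fun n => (hmeas_h n).aestronglyMeasurable)
    hε hhlim (fun n => {ω | ε ≤ |hfun n ω - c|}) (fun n => subset_rfl)
  have hbad2 := MHS3.prob_tendsto_zero (P := P) (fun n => (hmeas_g n).aestronglyMeasurable)
    (by linarith : (0:ℝ) < ε / 2) hglim
    (fun n => {ω | ε / 2 ≤ |gfun n ω - (c - (c₂ - c₁))|}) (fun n => subset_rfl)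
  have hbad3 := MHS3.prob_tendsto_zero (P := P) (fun n => (hmeas_V c₁ n).aestronglyMeasurable)
    (by linarith : (0:ℝ) < p₁ - 1 / 2) hV₁lim
    (fun n => {ω | p₁ - 1 / 2 ≤ |V₁ n ω - p₁|}) (fun n => subset_rfl)
  have hbad4 := MHS3.prob_tendsto_zero (P := P) (fun n => (hmeas_V c₂ n).aestronglyMeasurable)
    (by linarith : (0:ℝ) < 1 / 2 - p₂) hV₂lim
    (fun n => {ω | 1 / 2 - p₂ ≤ |V₂ n ω - p₂|}) (fun n => subset_rfl)
  -- assemble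
  have hupper : Tendsto (fun n =>
      P {ω | ε ≤ |hfun n ω - c|} + P {ω | ε / 2 ≤ |gfun n ω - (c - (c₂ - c₁))|}
        + P {ω | p₁ - 1 / 2 ≤ |V₁ n ω - p₁|} + P {ω | 1 / 2 - p₂ ≤ |V₂ n ω - p₂|})
      atTop (𝓝 0) := by
    have := ((hbad1.add hbad2).add hbad3).add hbad4
    simpa using this
  refine tendsto_of_tendsto_of_tendsto_of_le_of_le' tendsto_const_nhds hupper
    (Eventually.of_forall fun n => zero_le) ?_
  filter_upwards [eventually_ge_atTop 1] with n hn
  -- key inclusion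
  have hincl : {ω |
      |sSup {d : ℝ | ∃ y : Finset ℕ, y ⊆ Finset.range (2 * n) ∧
          y.card = n ∧
          d = |(∑ i ∈ y, X i ω / (∑ j ∈ Finset.range (2 * n), X j ω)) - 1 / 2|
            + |(∑ i ∈ Finset.range (2 * n) \ y,
                  X i ω / (∑ j ∈ Finset.range (2 * n), X j ω)) - 1 / 2|}
        - Real.log 2| > ε}
      ⊆ ({ω | ε ≤ |hfun n ω - c|} ∪ {ω | ε / 2 ≤ |gfun n ω - (c - (c₂ - c₁))|}
        ∪ {ω | p₁ - 1 / 2 ≤ |V₁ n ω - p₁|} ∪ {ω | 1 / 2 - p₂ ≤ |V₂ n ω - p₂|})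
        ∪ (⋃ i, {ω | X i ω ≤ 0}) := by
    intro ω hω
    by_contra hcon
    rw [Set.mem_union, Set.mem_union, Set.mem_union, Set.mem_union] at hcon
    push_neg at hcon
    obtain ⟨⟨⟨⟨hn1, hn2⟩, hn3⟩, hn4⟩, hn0⟩ := hcon
    rw [Set.mem_iUnion] at hn0
    push_neg at hn0
    have hpos : ∀ i ∈ Finset.range (2 * n), 0 < (fun i => X i ω) i := by
      intro i _
      have := hn0 i
      simp only [Set.mem_setOf_eq, not_le] at this
      exact this
    -- counting
    have hcount : ∀ a : ℝ, (∑ i ∈ Finset.range (2 * n),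
        (Set.Ici a).indicator (fun _ => (1:ℝ)) (X i ω))
        = (((Finset.range (2 * n)).filter (fun i => a ≤ X i ω)).card : ℝ) := by
      intro a
      rw [← Finset.sum_boole]
      apply Finset.sum_congr rfl
      intro i _
      rw [Set.indicator_apply]
      simp [Set.mem_Ici]
    have hN1 : n ≤ ((Finset.range (2 * n)).filter (fun i => c₁ ≤ X i ω)).card := by
      simp only [Set.mem_setOf_eq, not_le] at hn3
      have hV : 1 / 2 < V₁ n ω := by
        by_contra h
        push_neg at h
        have : p₁ - 1 / 2 ≤ |V₁ n ω - p₁| := by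
          rw [abs_sub_comm, abs_of_nonneg (by linarith)]
          linarith
        linarith
      rw [hV₁] at hV
      simp only at hV
      rw [hcount c₁] at hV
      rw [lt_div_iff₀ (by positivity : (0:ℝ) < ((2 * n : ℕ) : ℝ))] at hV
      have : (n : ℝ) < (((Finset.range (2 * n)).filter (fun i => c₁ ≤ X i ω)).card : ℝ) := by
        push_cast at hV ⊢
        linarith
      exact_mod_cast this.le
    have hN2 : ((Finset.range (2 * n)).filter (fun i => c₂ ≤ X i ω)).card ≤ n := by
      simp only [Set.mem_setOf_eq, not_le] at hn4
      have hV : V₂ n ω < 1 / 2 := by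
        by_contra h
        push_neg at h
        have : 1 / 2 - p₂ ≤ |V₂ n ω - p₂| := by
          rw [abs_of_nonneg (by linarith)]
          linarith
        linarith
      rw [hV₂] at hV
      simp only at hV
      rw [hcount c₂] at hV
      rw [div_lt_iff₀ (by positivity : (0:ℝ) < ((2 * n : ℕ) : ℝ))] at hV
      have : ((((Finset.range (2 * n)).filter (fun i => c₂ ≤ X i ω)).card : ℝ)) < (n : ℝ) + 1 := by
        push_cast at hV ⊢
        linarith
      have := this
      exact_mod_cast Nat.lt_add_one_iff.mp (by exact_mod_cast this)
    obtain ⟨hlow, hup⟩ := MHS4.det_bounds (x := fun i => X i ω) (n := n) hn hpos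
      (by rw [hc₁]; linarith : c₁ ≤ c) (by rw [hc₂]; linarith : c ≤ c₂) hN1 hN2
    have hDeq : {d : ℝ | ∃ y : Finset ℕ, y ⊆ Finset.range (2 * n) ∧
          y.card = n ∧
          d = |(∑ i ∈ y, X i ω / (∑ j ∈ Finset.range (2 * n), X j ω)) - 1 / 2|
            + |(∑ i ∈ Finset.range (2 * n) \ y,
                  X i ω / (∑ j ∈ Finset.range (2 * n), X j ω)) - 1 / 2|}
        = MHS4.Dset (fun i => X i ω) n := rfl
    rw [Set.mem_setOf_eq, hDeq] at hω
    simp only [Set.mem_setOf_eq, not_le] at hn1 hn2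
    have hub : sSup (MHS4.Dset (fun i => X i ω) n) - c < ε := by
      have : hfun n ω - c < ε := by
        rcases abs_lt.mp hn1 with ⟨_, h2⟩
        linarith
      have hle : sSup (MHS4.Dset (fun i => X i ω) n) ≤ hfun n ω := hup
      linarith
    have hlb : -(ε) < sSup (MHS4.Dset (fun i => X i ω) n) - c := by
      have h2 : gfun n ω ≤ sSup (MHS4.Dset (fun i => X i ω) n) := hlow
      rcases abs_lt.mp hn2 with ⟨h3, _⟩
      have hκ : c₂ - c₁ = 2 * δ := by rw [hc₁, hc₂]; ring
      have : c - (c₂ - c₁) - ε / 2 < gfun n ω := by linarith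
      rw [hκ] at this
      linarith
    rw [← hc] at hω
    have : |sSup (MHS4.Dset (fun i => X i ω) n) - c| ≤ ε := by
      rw [abs_le]
      constructor <;> linarith
    exact absurd hω (not_lt.mpr this)
  calc P _ ≤ P (({ω | ε ≤ |hfun n ω - c|} ∪ {ω | ε / 2 ≤ |gfun n ω - (c - (c₂ - c₁))|}
        ∪ {ω | p₁ - 1 / 2 ≤ |V₁ n ω - p₁|} ∪ {ω | 1 / 2 - p₂ ≤ |V₂ n ω - p₂|})
        ∪ (⋃ i, {ω | X i ω ≤ 0})) := measure_mono hincl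
    _ ≤ P ({ω | ε ≤ |hfun n ω - c|} ∪ {ω | ε / 2 ≤ |gfun n ω - (c - (c₂ - c₁))|}
        ∪ {ω | p₁ - 1 / 2 ≤ |V₁ n ω - p₁|} ∪ {ω | 1 / 2 - p₂ ≤ |V₂ n ω - p₂|})
        + P (⋃ i, {ω | X i ω ≤ 0}) := measure_union_le _ _
    _ = P ({ω | ε ≤ |hfun n ω - c|} ∪ {ω | ε / 2 ≤ |gfun n ω - (c - (c₂ - c₁))|}
        ∪ {ω | p₁ - 1 / 2 ≤ |V₁ n ω - p₁|} ∪ {ω | 1 / 2 - p₂ ≤ |V₂ n ω - p₂|}) := by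
        rw [measure_iUnion_null (fun i => hXpos i), add_zero]
    _ ≤ P {ω | ε ≤ |hfun n ω - c|} + P {ω | ε / 2 ≤ |gfun n ω - (c - (c₂ - c₁))|}
        + P {ω | p₁ - 1 / 2 ≤ |V₁ n ω - p₁|} + P {ω | 1 / 2 - p₂ ≤ |V₂ n ω - p₂|} := by
        refine le_trans (measure_union_le _ _) (add_le_add ?_ le_rfl)
        refine le_trans (measure_union_le _ _) (add_le_add ?_ le_rfl)
        exact measure_union_le _ _
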